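/- Let ℓ² be the Hilbert space of square-summable real sequences with its usual norm ‖·‖₂, and let B denote its closed unit ball. Define τ : [−1,1] → [−1,1] by τ(t) = √2·t + (√2 − 1) for −1 ≤ t ≤ −(√2 − 1)/√2, τ(t) = 0 for −(√2 − 1)/√2 ≤ t ≤ (√2 − 1)/√2, and τ(t) = √2·t − (√2 − 1) for (√2 − 1)/√2 ≤ t ≤ 1, and define T : B → B by T(x₁, x₂, x₃, x₄, …) = (τ(x₂), √(2/3)·x₃, x₄, x₅, …). Then no iterate of T is nonexpansive: for every j ≥ 1 there exist x, y ∈ B with ‖Tʲx − Tʲy‖₂ > ‖x − y‖₂ (indeed the Lipschitz constant of T is √2 and that of Tʲ is 2/√3 for every j ≥ 2). -/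

import Mathlib

open Real

/-- The piecewise map `τ : [-1,1] → [-1,1]` of Goebel and Sims. -/
noncomputable def tau (t : ℝ) : ℝ :=
  if t ≤ -((Real.sqrt 2 - 1) / Real.sqrt 2) then Real.sqrt 2 * t + (Real.sqrt 2 - 1)
  else if t ≤ (Real.sqrt 2 - 1) / Real.sqrt 2 then 0
  else Real.sqrt 2 * t - (Real.sqrt 2 - 1)

/-- The map `T(x₁, x₂, x₃, x₄, …) = (τ(x₂), √(2/3)·x₃, x₄, x₅, …)` on real sequences
(0-indexed: `x j` is the `(j+1)`-st coordinate). -/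
noncomputable def Tseq (x : ℕ → ℝ) : ℕ → ℝ
  | 0 => tau (x 1)
  | 1 => Real.sqrt (2 / 3) * x 2
  | n + 2 => x (n + 3)

/-- Membership in the closed unit ball of `ℓ²`: square-summable with `∑' j, (x j)² ≤ 1`. -/
def InBall (x : ℕ → ℝ) : Prop := Memℓp x 2 ∧ (∑' j, (x j) ^ 2) ≤ 1

private lemma s2_sq : Real.sqrt 2 ^ 2 = 2 := Real.sq_sqrt (by norm_num)
private lemma s2_gt : (1.4:ℝ) < Real.sqrt 2 := by
  nlinarith [s2_sq, Real.sqrt_nonneg 2]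
private lemma s2_lt : Real.sqrt 2 < 1.5 := by
  nlinarith [s2_sq, Real.sqrt_nonneg 2]
private lemma s2_pos : (0:ℝ) < Real.sqrt 2 := by linarith [s2_gt]

private lemma cc_sq : Real.sqrt (2/3) ^ 2 = 2/3 := Real.sq_sqrt (by norm_num)
private lemma cc_gt : (0.8:ℝ) < Real.sqrt (2/3) := by
  nlinarith [cc_sq, Real.sqrt_nonneg (2/3:ℝ)]
private lemma cc_lt : Real.sqrt (2/3) < 1 := by
  nlinarith [cc_sq, Real.sqrt_nonneg (2/3:ℝ)]

private lemma thr_eq : Real.sqrt 2 * ((Real.sqrt 2 - 1) / Real.sqrt 2) = Real.sqrt 2 - 1 := by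
  field_simp

private lemma thr_nonneg : 0 ≤ (Real.sqrt 2 - 1) / Real.sqrt 2 := by
  have h := s2_gt
  have h2 := s2_pos
  exact div_nonneg (by linarith) (le_of_lt h2)

private lemma thr_lt : (Real.sqrt 2 - 1) / Real.sqrt 2 < 0.4 := by
  rw [div_lt_iff₀ s2_pos]; nlinarith [s2_gt, s2_lt]

private lemma tau_lip_aux (a th s t : ℝ) (h2 : a ^ 2 = 2) (hth : a * th = a - 1)
    (hth0 : 0 ≤ th) :
    ((if s ≤ -th then a * s + (a - 1) else if s ≤ th then 0 else a * s - (a - 1)) -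
     (if t ≤ -th then a * t + (a - 1) else if t ≤ th then 0 else a * t - (a - 1))) ^ 2
      ≤ 2 * (s - t) ^ 2 := by
  have e1 : a - 1 = a * th := hth.symm
  split_ifs with h1 h3 h4 h5 h6 h7 h8 h9 <;> (try simp only [e1]) <;> (try push_neg at *)
  · nlinarith [sq_nonneg (s - t)]
  · nlinarith [mul_nonneg (by linarith : (0:ℝ) ≤ t + th) (by linarith : (0:ℝ) ≤ t - th - 2*s)]
  · nlinarith [mul_nonneg hth0 (by linarith : (0:ℝ) ≤ t - s - th)]
  · nlinarith [mul_nonneg (by linarith : (0:ℝ) ≤ s + th) (by linarith : (0:ℝ) ≤ s - th - 2*t)]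
  · nlinarith [sq_nonneg (s - t)]
  · nlinarith [mul_nonneg (by linarith : (0:ℝ) ≤ th - s) (by linarith : (0:ℝ) ≤ 2*t - s - th)]
  · nlinarith [mul_nonneg hth0 (by linarith : (0:ℝ) ≤ s - t - th)]
  · nlinarith [mul_nonneg (by linarith : (0:ℝ) ≤ th - t) (by linarith : (0:ℝ) ≤ 2*s - t - th)]
  · nlinarith [sq_nonneg (s - t)]

lemma tau_lip (s t : ℝ) : (tau s - tau t) ^ 2 ≤ 2 * (s - t) ^ 2 := by
  have := tau_lip_aux (Real.sqrt 2) ((Real.sqrt 2 - 1) / Real.sqrt 2) s t s2_sq thr_eq thr_nonneg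
  simpa [tau] using this

lemma tau_right {t : ℝ} (h : (Real.sqrt 2 - 1)/Real.sqrt 2 < t) :
    tau t = Real.sqrt 2 * t - (Real.sqrt 2 - 1) := by
  have h0 := thr_nonneg
  unfold tau
  rw [if_neg (by linarith), if_neg (by linarith)]

lemma Tseq_ge2 (x : ℕ → ℝ) {n : ℕ} (hn : 2 ≤ n) : Tseq x n = x (n + 1) := by
  obtain ⟨m, rfl⟩ := Nat.exists_eq_add_of_le' hn
  rfl

lemma iter_apply (j : ℕ) (hj : 2 ≤ j) (x : ℕ → ℝ) :
    Tseq^[j] x 0 = tau (Real.sqrt (2/3) * x j) ∧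
    Tseq^[j] x 1 = Real.sqrt (2/3) * x (j + 1) ∧
    ∀ n, 2 ≤ n → Tseq^[j] x (n) = x (n + j) := by
  induction j, hj using Nat.le_induction generalizing x with
  | base =>
    refine ⟨?_, ?_, fun n hn => ?_⟩
    · show Tseq (Tseq x) 0 = _
      show tau ((Tseq x) 1) = _
      rfl
    · show Tseq (Tseq x) 1 = _
      show Real.sqrt (2/3) * (Tseq x 2) = _
      rfl
    · show Tseq (Tseq x) n = _
      rw [Tseq_ge2 _ hn, Tseq_ge2 _ (by omega)]
  | succ j hj ih =>
    have h : Tseq^[j + 1] x = Tseq^[j] (Tseq x) := Function.iterate_succ_apply Tseq j x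
    obtain ⟨i0, i1, i2⟩ := ih (Tseq x)
    refine ⟨?_, ?_, fun n hn => ?_⟩
    · rw [h, i0, Tseq_ge2 x hj]
    · rw [h, i1, Tseq_ge2 x (by omega)]
    · rw [h, i2 n hn, Tseq_ge2 x (by omega)]
      exact congrArg x (by omega)

open scoped ENNReal in
lemma memlp_summable {x : ℕ → ℝ} (h : Memℓp x 2) : Summable fun i => (x i) ^ 2 := by
  have h1 := (memℓp_gen_iff (p := 2) (by norm_num)).1 h
  have : (fun i => ‖x i‖ ^ (2:ℝ≥0∞).toReal) = fun i => (x i) ^ 2 := by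
    funext i
    rw [show (2:ℝ≥0∞).toReal = ((2:ℕ):ℝ) by norm_num, Real.rpow_natCast]
    simp [sq_abs]
  rwa [this] at h1

lemma summable_diff_sq {x y : ℕ → ℝ} (hx : InBall x) (hy : InBall y) :
    Summable fun i => (x i - y i) ^ 2 := by
  have hx2 := memlp_summable hx.1
  have hy2 := memlp_summable hy.1
  refine Summable.of_nonneg_of_le (fun i => sq_nonneg _) (fun i => ?_)
    ((hx2.mul_left 2).add (hy2.mul_left 2))
  nlinarith [sq_nonneg (x i + y i)]

lemma tsum_shift_le {d : ℕ → ℝ} (hd : Summable d) (h0 : ∀ i, 0 ≤ d i) (j : ℕ) :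
    ∑' n, d (n + j) ≤ ∑' n, d n :=
  Summable.tsum_le_tsum_of_inj (fun n => n + j) (add_left_injective j) (fun c _ => h0 c)
    (fun _ => le_refl _) (hd.comp_injective (add_left_injective j)) hd

lemma tsum_bound {u d : ℕ → ℝ} (K : ℝ) (j : ℕ) (hd : Summable d) (hd0 : ∀ i, 0 ≤ d i)
    (hu0 : ∀ i, 0 ≤ u i) (hK : 0 ≤ K) (h : ∀ i, u i ≤ K * d (i + j)) :
    ∑' i, u i ≤ K * ∑' i, d i := by
  have hdj : Summable fun n => d (n + j) := hd.comp_injective (add_left_injective j)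
  have hu : Summable u := Summable.of_nonneg_of_le hu0 h (hdj.mul_left K)
  calc ∑' i, u i ≤ ∑' i, K * d (i + j) := Summable.tsum_le_tsum h hu (hdj.mul_left K)
    _ = K * ∑' i, d (i + j) := tsum_mul_left
    _ ≤ K * ∑' i, d i := mul_le_mul_of_nonneg_left (tsum_shift_le hd hd0 j) hK

noncomputable def wit (m : ℕ) (v : ℝ) : ℕ → ℝ := fun i => if i = m then v else 0

open scoped ENNReal in
lemma memlp_of_summable {x : ℕ → ℝ} (h : Summable fun i => (x i) ^ 2) : Memℓp x 2 := by
  apply memℓp_gen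
  have e : (fun i => ‖x i‖ ^ (2:ℝ≥0∞).toReal) = fun i => (x i) ^ 2 := by
    funext i
    rw [show (2:ℝ≥0∞).toReal = ((2:ℕ):ℝ) by norm_num, Real.rpow_natCast]
    simp [sq_abs]
  rwa [e]

lemma wit_inball (m : ℕ) (v : ℝ) (hv : v ^ 2 ≤ 1) : InBall (wit m v) := by
  have hs : Summable fun i => (wit m v i) ^ 2 := by
    apply summable_of_ne_finset_zero (s := {m})
    intro b hb
    simp only [Finset.mem_singleton] at hb
    simp [wit, hb]
  refine ⟨memlp_of_summable hs, ?_⟩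
  rw [tsum_eq_single m (by intro b hb; simp [wit, hb])]
  simpa [wit] using hv

lemma wit_diff (m : ℕ) (a b : ℝ) : ∑' i, (wit m a i - wit m b i) ^ 2 = (a - b) ^ 2 := by
  rw [tsum_eq_single m (by intro c hc; simp [wit, hc])]
  simp [wit]

lemma lip_T {x y : ℕ → ℝ} (hx : InBall x) (hy : InBall y) :
    ∑' i, (Tseq x i - Tseq y i) ^ 2 ≤ 2 * ∑' i, (x i - y i) ^ 2 := by
  apply tsum_bound 2 1 (summable_diff_sq hx hy) (fun i => sq_nonneg _) (fun i => sq_nonneg _)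
    (by norm_num)
  intro i
  match i with
  | 0 => exact tau_lip (x 1) (y 1)
  | 1 =>
    show (Real.sqrt (2/3) * x 2 - Real.sqrt (2/3) * y 2) ^ 2 ≤ 2 * (x 2 - y 2) ^ 2
    nlinarith [cc_sq, sq_nonneg (x 2 - y 2)]
  | (n+2) =>
    show (x (n+3) - y (n+3)) ^ 2 ≤ 2 * (x (n+3) - y (n+3)) ^ 2
    nlinarith [sq_nonneg (x (n+3) - y (n+3))]

lemma lip_Tj {j : ℕ} (hj : 2 ≤ j) {x y : ℕ → ℝ} (hx : InBall x) (hy : InBall y) :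
    ∑' i, (Tseq^[j] x i - Tseq^[j] y i) ^ 2 ≤ (4/3) * ∑' i, (x i - y i) ^ 2 := by
  obtain ⟨x0, x1, x2⟩ := iter_apply j hj x
  obtain ⟨y0, y1, y2⟩ := iter_apply j hj y
  apply tsum_bound (4/3) j (summable_diff_sq hx hy) (fun i => sq_nonneg _) (fun i => sq_nonneg _)
    (by norm_num)
  intro i
  match i with
  | 0 =>
    rw [x0, y0]
    have h := tau_lip (Real.sqrt (2/3) * x j) (Real.sqrt (2/3) * y j)
    have : (0 : ℕ) + j = j := by omega
    rw [this]
    nlinarith [cc_sq, sq_nonneg (x j - y j)]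
  | 1 =>
    rw [x1, y1, show 1 + j = j + 1 from by omega]
    nlinarith [cc_sq, sq_nonneg (x (j + 1) - y (j + 1))]
  | (n+2) =>
    rw [x2 (n+2) (by omega), y2 (n+2) (by omega)]
    nlinarith [sq_nonneg (x (n+2+j) - y (n+2+j))]

lemma T_wit_tsum : ∑' i, (Tseq (wit 1 1) i - Tseq (wit 1 (1/2)) i) ^ 2 = 1/2 := by
  have hthr := thr_lt
  rw [tsum_eq_single 0 ?side]
  case side =>
    intro b hb
    match b with
    | 0 => exact absurd rfl hb
    | 1 =>
      show (Real.sqrt (2/3) * wit 1 1 2 - Real.sqrt (2/3) * wit 1 (1/2) 2) ^ 2 = 0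
      simp [wit]
    | (n+2) =>
      show (wit 1 1 (n+3) - wit 1 (1/2) (n+3)) ^ 2 = 0
      simp [wit]
  show (tau (wit 1 1 1) - tau (wit 1 (1/2) 1)) ^ 2 = 1/2
  have e1 : wit 1 (1:ℝ) 1 = 1 := by simp [wit]
  have e2 : wit 1 (1/2:ℝ) 1 = 1/2 := by simp [wit]
  rw [e1, e2, tau_right (by linarith), tau_right (by linarith)]
  have : Real.sqrt 2 * 1 - (Real.sqrt 2 - 1) - (Real.sqrt 2 * (1/2) - (Real.sqrt 2 - 1))
      = Real.sqrt 2 * (1/2) := by ring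
  rw [this, mul_pow, s2_sq]
  norm_num

lemma iter_wit_tsum (j : ℕ) (hj : 2 ≤ j) :
    ∑' i, (Tseq^[j] (wit j 1) i - Tseq^[j] (wit j (1/2)) i) ^ 2 = 1/3 := by
  have hthr := thr_lt
  have hcc := cc_gt
  obtain ⟨x0, x1, x2⟩ := iter_apply j hj (wit j 1)
  obtain ⟨y0, y1, y2⟩ := iter_apply j hj (wit j (1/2))
  rw [tsum_eq_single 0 ?side]
  case side =>
    intro b hb
    match b with
    | 0 => exact absurd rfl hb
    | 1 =>
      rw [x1, y1]
      have : wit j (1:ℝ) (j+1) = 0 := by simp [wit]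
      have : wit j (1/2:ℝ) (j+1) = 0 := by simp [wit]
      simp_all [wit]
    | (n+2) =>
      rw [x2 (n+2) (by omega), y2 (n+2) (by omega)]
      have h1 : n + 2 + j ≠ j := by omega
      simp [wit, h1]
  rw [x0, y0]
  have e1 : wit j (1:ℝ) j = 1 := by simp [wit]
  have e2 : wit j (1/2:ℝ) j = 1/2 := by simp [wit]
  rw [e1, e2, mul_one, tau_right (by linarith), tau_right (by linarith)]
  have : Real.sqrt 2 * Real.sqrt (2/3) - (Real.sqrt 2 - 1)
      - (Real.sqrt 2 * (Real.sqrt (2/3) * (1/2)) - (Real.sqrt 2 - 1))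
      = Real.sqrt 2 * Real.sqrt (2/3) * (1/2) := by ring
  rw [this]
  have : (Real.sqrt 2 * Real.sqrt (2/3) * (1/2)) ^ 2
      = Real.sqrt 2 ^ 2 * Real.sqrt (2/3) ^ 2 * (1/4) := by ring
  rw [this, s2_sq, cc_sq]
  norm_num

/-- No iterate of `T` is nonexpansive on the closed unit ball `B` of `ℓ²`: for every
`j ≥ 1` there are `x, y ∈ B` with `‖Tʲx - Tʲy‖₂ > ‖x - y‖₂` (norms are compared via
`‖z‖₂² = ∑' i, (z i)²`).  Indeed, the Lipschitz constant of `T` on `B` is exactly `√2`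
and that of `Tʲ` is exactly `2/√3` for every `j ≥ 2` (a constant `k ≥ 0` is a Lipschitz
bound iff `∑' i, (Sx i - Sy i)² ≤ k² · ∑' i, (x i - y i)²` for all `x, y ∈ B`). -/
theorem Tseq_iterates_not_nonexpansive :
    (∀ j : ℕ, 1 ≤ j → ∃ x y : ℕ → ℝ, InBall x ∧ InBall y ∧
      (∑' i, (x i - y i) ^ 2) < ∑' i, (Tseq^[j] x i - Tseq^[j] y i) ^ 2) ∧
    (∀ x y : ℕ → ℝ, InBall x → InBall y →
      (∑' i, (Tseq x i - Tseq y i) ^ 2) ≤ Real.sqrt 2 ^ 2 * ∑' i, (x i - y i) ^ 2) ∧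
    (∀ k : ℝ, 0 ≤ k →
      (∀ x y : ℕ → ℝ, InBall x → InBall y →
        (∑' i, (Tseq x i - Tseq y i) ^ 2) ≤ k ^ 2 * ∑' i, (x i - y i) ^ 2) →
      Real.sqrt 2 ≤ k) ∧
    (∀ j : ℕ, 2 ≤ j →
      (∀ x y : ℕ → ℝ, InBall x → InBall y →
        (∑' i, (Tseq^[j] x i - Tseq^[j] y i) ^ 2) ≤
          (2 / Real.sqrt 3) ^ 2 * ∑' i, (x i - y i) ^ 2) ∧
      (∀ k : ℝ, 0 ≤ k →
        (∀ x y : ℕ → ℝ, InBall x → InBall y →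
          (∑' i, (Tseq^[j] x i - Tseq^[j] y i) ^ 2) ≤ k ^ 2 * ∑' i, (x i - y i) ^ 2) →
        2 / Real.sqrt 3 ≤ k)) := by
  have h13 : Real.sqrt 3 ^ 2 = 3 := Real.sq_sqrt (by norm_num)
  have h3pos : (0:ℝ) < Real.sqrt 3 := Real.sqrt_pos.2 (by norm_num)
  refine ⟨?_, ?_, ?_, ?_⟩
  · intro j hj
    rcases eq_or_lt_of_le hj with h | h
    · subst h
      refine ⟨wit 1 1, wit 1 (1/2), wit_inball _ _ (by norm_num),
        wit_inball _ _ (by norm_num), ?_⟩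
      rw [wit_diff, Function.iterate_one, T_wit_tsum]
      norm_num
    · have hj2 : 2 ≤ j := h
      refine ⟨wit j 1, wit j (1/2), wit_inball _ _ (by norm_num),
        wit_inball _ _ (by norm_num), ?_⟩
      rw [wit_diff, iter_wit_tsum j hj2]
      norm_num
  · intro x y hx hy
    rw [s2_sq]
    exact lip_T hx hy
  · intro k hk hle
    have h := hle (wit 1 1) (wit 1 (1/2)) (wit_inball _ _ (by norm_num))
      (wit_inball _ _ (by norm_num))
    rw [wit_diff, T_wit_tsum] at h
    have h2 : 2 ≤ k ^ 2 := by nlinarith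
    calc Real.sqrt 2 ≤ Real.sqrt (k ^ 2) := Real.sqrt_le_sqrt h2
      _ = k := Real.sqrt_sq hk
  · intro j hj
    constructor
    · intro x y hx hy
      have e : (2 / Real.sqrt 3) ^ 2 = 4/3 := by rw [div_pow, h13]; norm_num
      rw [e]
      exact lip_Tj hj hx hy
    · intro k hk hle
      have h := hle (wit j 1) (wit j (1/2)) (wit_inball _ _ (by norm_num))
        (wit_inball _ _ (by norm_num))
      rw [wit_diff, iter_wit_tsum j hj] at h
      have h2 : 4/3 ≤ k ^ 2 := by nlinarith
      rw [div_le_iff₀ h3pos]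
      have hpos : 0 ≤ k * Real.sqrt 3 := mul_nonneg hk h3pos.le
      have hksq : 4 ≤ (k * Real.sqrt 3) ^ 2 := by rw [mul_pow, h13]; linarith
      nlinarith [hksq, hpos]
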